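/- For vector fields u, v ∈ H^1(D) on a bounded Lipschitz domain D ⊆ R^3 and a Lipschitz velocity field β, the integration-by-parts identity (L_β u, v)_D = (u, 𝓛_β v)_D + ⟨β·n, u·v⟩_{∂D} holds, where L_β u = -β × (∇ × u) + ∇(β · u), 𝓛_β v = ∇ × (β × v) - β (∇ · v), and n is the outward unit normal. -/

import Mathlib

open Matrix MeasureTheory

/-- Gradient of a scalar field on `ℝ³`. -/
noncomputable def vgrad (f : (Fin 3 → ℝ) → ℝ) (x : Fin 3 → ℝ) : Fin 3 → ℝ :=
  fun i => fderiv ℝ f x (Pi.single i 1)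

/-- Curl of a vector field on `ℝ³`. -/
noncomputable def vcurl (F : (Fin 3 → ℝ) → (Fin 3 → ℝ)) (x : Fin 3 → ℝ) : Fin 3 → ℝ :=
  ![fderiv ℝ F x (Pi.single 1 1) 2 - fderiv ℝ F x (Pi.single 2 1) 1,
    fderiv ℝ F x (Pi.single 2 1) 0 - fderiv ℝ F x (Pi.single 0 1) 2,
    fderiv ℝ F x (Pi.single 0 1) 1 - fderiv ℝ F x (Pi.single 1 1) 0]

/-- Divergence of a vector field on `ℝ³`. -/
noncomputable def vdiv (F : (Fin 3 → ℝ) → (Fin 3 → ℝ)) (x : Fin 3 → ℝ) : ℝ :=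
  ∑ j, fderiv ℝ F x (Pi.single j 1) j

/-- The magnetic advection operator `L_β u = -β × (∇×u) + ∇(β·u)`. -/
noncomputable def magAdv (β u : (Fin 3 → ℝ) → (Fin 3 → ℝ)) (x : Fin 3 → ℝ) : Fin 3 → ℝ :=
  -((β x) ⨯₃ (vcurl u x)) + vgrad (fun y => β y ⬝ᵥ u y) x

/-- The formal dual operator `𝓛_β v = ∇ × (β × v) - β (∇·v)`. -/
noncomputable def magAdvDual (β v : (Fin 3 → ℝ) → (Fin 3 → ℝ)) (x : Fin 3 → ℝ) : Fin 3 → ℝ :=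
  vcurl (fun y => (β y) ⨯₃ (v y)) x - (vdiv v x) • β x

/-! ### Auxiliary lemmas -/

private lemma diff_proj {F : (Fin 3 → ℝ) → Fin 3 → ℝ} {x : Fin 3 → ℝ}
    (hF : DifferentiableAt ℝ F x) (k : Fin 3) :
    DifferentiableAt ℝ (fun y => F y k) x :=
  (ContinuousLinearMap.proj (R := ℝ) (φ := fun _ : Fin 3 => ℝ) k).differentiableAt.comp x hF

private lemma fd_proj {F : (Fin 3 → ℝ) → Fin 3 → ℝ} {x : Fin 3 → ℝ}
    (hF : DifferentiableAt ℝ F x) (k : Fin 3) (w : Fin 3 → ℝ) :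
    fderiv ℝ (fun y => F y k) x w = fderiv ℝ F x w k := by
  have h := ((ContinuousLinearMap.proj (R := ℝ) (φ := fun _ : Fin 3 => ℝ) k).hasFDerivAt.comp
    x hF.hasFDerivAt).fderiv
  rw [show (fun y => F y k)
      = (ContinuousLinearMap.proj (R := ℝ) (φ := fun _ : Fin 3 => ℝ) k) ∘ F from rfl, h]
  rfl

private lemma fd_proj' {F : (Fin 3 → ℝ) → Fin 3 → ℝ} {x : Fin 3 → ℝ}
    (hF : DifferentiableAt ℝ F x) (k : Fin 3) {g : (Fin 3 → ℝ) → ℝ}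
    (hg : ∀ y, F y k = g y) (w : Fin 3 → ℝ) :
    fderiv ℝ F x w k = fderiv ℝ g x w := by
  rw [← funext hg]
  exact (fd_proj hF k w).symm

private lemma fd_mul {f g : (Fin 3 → ℝ) → ℝ} {x w : Fin 3 → ℝ}
    (hf : DifferentiableAt ℝ f x) (hg : DifferentiableAt ℝ g x) :
    fderiv ℝ (fun y => f y * g y) x w = fderiv ℝ f x w * g x + f x * fderiv ℝ g x w := by
  rw [fderiv_fun_mul hf hg]; simp; ring

private lemma fd_add {f g : (Fin 3 → ℝ) → ℝ} {x w : Fin 3 → ℝ}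
    (hf : DifferentiableAt ℝ f x) (hg : DifferentiableAt ℝ g x) :
    fderiv ℝ (fun y => f y + g y) x w = fderiv ℝ f x w + fderiv ℝ g x w := by
  rw [fderiv_fun_add hf hg]; rfl

private lemma fd_sub {f g : (Fin 3 → ℝ) → ℝ} {x w : Fin 3 → ℝ}
    (hf : DifferentiableAt ℝ f x) (hg : DifferentiableAt ℝ g x) :
    fderiv ℝ (fun y => f y - g y) x w = fderiv ℝ f x w - fderiv ℝ g x w := by
  rw [fderiv_fun_sub hf hg]; rfl

private lemma dot_expand (f g : (Fin 3 → ℝ) → (Fin 3 → ℝ)) :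
    (fun y => f y ⬝ᵥ g y) = fun y => f y 0 * g y 0 + f y 1 * g y 1 + f y 2 * g y 2 := by
  funext y; simp [dotProduct, Fin.sum_univ_three]

private lemma diff_dot {f g : (Fin 3 → ℝ) → (Fin 3 → ℝ)} {x : Fin 3 → ℝ}
    (hf : DifferentiableAt ℝ f x) (hg : DifferentiableAt ℝ g x) :
    DifferentiableAt ℝ (fun y => f y ⬝ᵥ g y) x := by
  rw [dot_expand f g]
  exact (((diff_proj hf 0).fun_mul (diff_proj hg 0)).fun_add
    ((diff_proj hf 1).fun_mul (diff_proj hg 1))).fun_add ((diff_proj hf 2).fun_mul (diff_proj hg 2))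

private lemma fd_dot {f g : (Fin 3 → ℝ) → (Fin 3 → ℝ)} {x : Fin 3 → ℝ}
    (hf : DifferentiableAt ℝ f x) (hg : DifferentiableAt ℝ g x) (w : Fin 3 → ℝ) :
    fderiv ℝ (fun y => f y ⬝ᵥ g y) x w =
      (fderiv ℝ f x w 0 * g x 0 + f x 0 * fderiv ℝ g x w 0) +
      (fderiv ℝ f x w 1 * g x 1 + f x 1 * fderiv ℝ g x w 1) +
      (fderiv ℝ f x w 2 * g x 2 + f x 2 * fderiv ℝ g x w 2) := by
  rw [dot_expand f g,
    fd_add (((diff_proj hf 0).fun_mul (diff_proj hg 0)).fun_add ((diff_proj hf 1).fun_mul (diff_proj hg 1)))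
      ((diff_proj hf 2).fun_mul (diff_proj hg 2)),
    fd_add ((diff_proj hf 0).fun_mul (diff_proj hg 0)) ((diff_proj hf 1).fun_mul (diff_proj hg 1)),
    fd_mul (diff_proj hf 0) (diff_proj hg 0), fd_mul (diff_proj hf 1) (diff_proj hg 1),
    fd_mul (diff_proj hf 2) (diff_proj hg 2),
    fd_proj hf 0 w, fd_proj hf 1 w, fd_proj hf 2 w,
    fd_proj hg 0 w, fd_proj hg 1 w, fd_proj hg 2 w]

private lemma cross_apply0 (a b : Fin 3 → ℝ) : (a ⨯₃ b) 0 = a 1 * b 2 - a 2 * b 1 := by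
  simp [crossProduct]

private lemma cross_apply1 (a b : Fin 3 → ℝ) : (a ⨯₃ b) 1 = a 2 * b 0 - a 0 * b 2 := by
  simp [crossProduct]

private lemma cross_apply2 (a b : Fin 3 → ℝ) : (a ⨯₃ b) 2 = a 0 * b 1 - a 1 * b 0 := by
  simp [crossProduct]

private lemma diff_cross {f g : (Fin 3 → ℝ) → (Fin 3 → ℝ)} {x : Fin 3 → ℝ}
    (hf : DifferentiableAt ℝ f x) (hg : DifferentiableAt ℝ g x) :
    DifferentiableAt ℝ (fun y => f y ⨯₃ g y) x := by
  apply differentiableAt_pi.mpr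
  intro i
  fin_cases i
  · simp only [cross_apply0]
    exact ((diff_proj hf 1).fun_mul (diff_proj hg 2)).fun_sub ((diff_proj hf 2).fun_mul (diff_proj hg 1))
  · simp only [cross_apply1]
    exact ((diff_proj hf 2).fun_mul (diff_proj hg 0)).fun_sub ((diff_proj hf 0).fun_mul (diff_proj hg 2))
  · simp only [cross_apply2]
    exact ((diff_proj hf 0).fun_mul (diff_proj hg 1)).fun_sub ((diff_proj hf 1).fun_mul (diff_proj hg 0))

private lemma fd_cross0 {f g : (Fin 3 → ℝ) → (Fin 3 → ℝ)} {x : Fin 3 → ℝ}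
    (hf : DifferentiableAt ℝ f x) (hg : DifferentiableAt ℝ g x) (w : Fin 3 → ℝ) :
    fderiv ℝ (fun y => f y ⨯₃ g y) x w 0 =
      (fderiv ℝ f x w 1 * g x 2 + f x 1 * fderiv ℝ g x w 2) -
      (fderiv ℝ f x w 2 * g x 1 + f x 2 * fderiv ℝ g x w 1) := by
  rw [fd_proj' (diff_cross hf hg) 0 (fun y => cross_apply0 _ _) w,
    fd_sub ((diff_proj hf 1).fun_mul (diff_proj hg 2)) ((diff_proj hf 2).fun_mul (diff_proj hg 1)),
    fd_mul (diff_proj hf 1) (diff_proj hg 2), fd_mul (diff_proj hf 2) (diff_proj hg 1),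
    fd_proj hf 1 w, fd_proj hf 2 w, fd_proj hg 1 w, fd_proj hg 2 w]

private lemma fd_cross1 {f g : (Fin 3 → ℝ) → (Fin 3 → ℝ)} {x : Fin 3 → ℝ}
    (hf : DifferentiableAt ℝ f x) (hg : DifferentiableAt ℝ g x) (w : Fin 3 → ℝ) :
    fderiv ℝ (fun y => f y ⨯₃ g y) x w 1 =
      (fderiv ℝ f x w 2 * g x 0 + f x 2 * fderiv ℝ g x w 0) -
      (fderiv ℝ f x w 0 * g x 2 + f x 0 * fderiv ℝ g x w 2) := by
  rw [fd_proj' (diff_cross hf hg) 1 (fun y => cross_apply1 _ _) w,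
    fd_sub ((diff_proj hf 2).fun_mul (diff_proj hg 0)) ((diff_proj hf 0).fun_mul (diff_proj hg 2)),
    fd_mul (diff_proj hf 2) (diff_proj hg 0), fd_mul (diff_proj hf 0) (diff_proj hg 2),
    fd_proj hf 2 w, fd_proj hf 0 w, fd_proj hg 2 w, fd_proj hg 0 w]

private lemma fd_cross2 {f g : (Fin 3 → ℝ) → (Fin 3 → ℝ)} {x : Fin 3 → ℝ}
    (hf : DifferentiableAt ℝ f x) (hg : DifferentiableAt ℝ g x) (w : Fin 3 → ℝ) :
    fderiv ℝ (fun y => f y ⨯₃ g y) x w 2 =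
      (fderiv ℝ f x w 0 * g x 1 + f x 0 * fderiv ℝ g x w 1) -
      (fderiv ℝ f x w 1 * g x 0 + f x 1 * fderiv ℝ g x w 0) := by
  rw [fd_proj' (diff_cross hf hg) 2 (fun y => cross_apply2 _ _) w,
    fd_sub ((diff_proj hf 0).fun_mul (diff_proj hg 1)) ((diff_proj hf 1).fun_mul (diff_proj hg 0)),
    fd_mul (diff_proj hf 0) (diff_proj hg 1), fd_mul (diff_proj hf 1) (diff_proj hg 0),
    fd_proj hf 0 w, fd_proj hf 1 w, fd_proj hg 0 w, fd_proj hg 1 w]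

private lemma fd_dot_exp {f g : (Fin 3 → ℝ) → (Fin 3 → ℝ)} {x : Fin 3 → ℝ}
    (hf : DifferentiableAt ℝ f x) (hg : DifferentiableAt ℝ g x) (w : Fin 3 → ℝ) :
    fderiv ℝ (fun y => f y 0 * g y 0 + f y 1 * g y 1 + f y 2 * g y 2) x w =
      (fderiv ℝ f x w 0 * g x 0 + f x 0 * fderiv ℝ g x w 0) +
      (fderiv ℝ f x w 1 * g x 1 + f x 1 * fderiv ℝ g x w 1) +
      (fderiv ℝ f x w 2 * g x 2 + f x 2 * fderiv ℝ g x w 2) := by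
  rw [fd_add (((diff_proj hf 0).fun_mul (diff_proj hg 0)).fun_add ((diff_proj hf 1).fun_mul (diff_proj hg 1)))
      ((diff_proj hf 2).fun_mul (diff_proj hg 2)),
    fd_add ((diff_proj hf 0).fun_mul (diff_proj hg 0)) ((diff_proj hf 1).fun_mul (diff_proj hg 1)),
    fd_mul (diff_proj hf 0) (diff_proj hg 0), fd_mul (diff_proj hf 1) (diff_proj hg 1),
    fd_mul (diff_proj hf 2) (diff_proj hg 2),
    fd_proj hf 0 w, fd_proj hf 1 w, fd_proj hf 2 w,
    fd_proj hg 0 w, fd_proj hg 1 w, fd_proj hg 2 w]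

private lemma fd_smul_exp {f g h : (Fin 3 → ℝ) → (Fin 3 → ℝ)} {x : Fin 3 → ℝ}
    (hf : DifferentiableAt ℝ f x) (hg : DifferentiableAt ℝ g x)
    (hh : DifferentiableAt ℝ h x) (j : Fin 3) (w : Fin 3 → ℝ) :
    fderiv ℝ (fun y => (f y 0 * g y 0 + f y 1 * g y 1 + f y 2 * g y 2) • h y) x w j =
      ((fderiv ℝ f x w 0 * g x 0 + f x 0 * fderiv ℝ g x w 0) +
       (fderiv ℝ f x w 1 * g x 1 + f x 1 * fderiv ℝ g x w 1) +
       (fderiv ℝ f x w 2 * g x 2 + f x 2 * fderiv ℝ g x w 2)) * h x j +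
      (f x 0 * g x 0 + f x 1 * g x 1 + f x 2 * g x 2) * fderiv ℝ h x w j := by
  have hsum : DifferentiableAt ℝ (fun y => f y 0 * g y 0 + f y 1 * g y 1 + f y 2 * g y 2) x :=
    (((diff_proj hf 0).fun_mul (diff_proj hg 0)).fun_add
      ((diff_proj hf 1).fun_mul (diff_proj hg 1))).fun_add ((diff_proj hf 2).fun_mul (diff_proj hg 2))
  rw [fd_proj' (hsum.fun_smul hh) j
      (g := fun y => (f y 0 * g y 0 + f y 1 * g y 1 + f y 2 * g y 2) * h y j)
      (fun y => by simp) w,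
    fd_mul hsum (diff_proj hh j), fd_dot_exp hf hg w, fd_proj hh j w]

/-- The pointwise identity `L_β u · v = u · 𝓛_β v + ∇·((u·v) β)`. -/
private lemma magAdv_key (β u v : (Fin 3 → ℝ) → (Fin 3 → ℝ))
    (hβ : ContDiff ℝ 1 β) (hu : ContDiff ℝ 1 u) (hv : ContDiff ℝ 1 v) (x : Fin 3 → ℝ) :
    magAdv β u x ⬝ᵥ v x =
      u x ⬝ᵥ magAdvDual β v x + vdiv (fun y => (u y ⬝ᵥ v y) • β y) x := by
  have hβx : DifferentiableAt ℝ β x := (hβ.differentiable one_ne_zero) x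
  have hux : DifferentiableAt ℝ u x := (hu.differentiable one_ne_zero) x
  have hvx : DifferentiableAt ℝ v x := (hv.differentiable one_ne_zero) x
  unfold magAdv magAdvDual vgrad vcurl vdiv
  simp only [dotProduct, Fin.sum_univ_three, Pi.add_apply, Pi.neg_apply, Pi.sub_apply,
    Pi.smul_apply, smul_eq_mul, cross_apply0, cross_apply1, cross_apply2,
    Matrix.cons_val_zero, Matrix.cons_val_one, Matrix.head_cons, Matrix.cons_val_two,
    Matrix.tail_cons]
  rw [fd_dot_exp hβx hux (Pi.single 0 1), fd_dot_exp hβx hux (Pi.single 1 1),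
    fd_dot_exp hβx hux (Pi.single 2 1),
    fd_cross0 hβx hvx (Pi.single 2 1), fd_cross0 hβx hvx (Pi.single 1 1),
    fd_cross1 hβx hvx (Pi.single 0 1), fd_cross1 hβx hvx (Pi.single 2 1),
    fd_cross2 hβx hvx (Pi.single 0 1), fd_cross2 hβx hvx (Pi.single 1 1),
    fd_smul_exp hux hvx hβx 0 (Pi.single 0 1), fd_smul_exp hux hvx hβx 1 (Pi.single 1 1),
    fd_smul_exp hux hvx hβx 2 (Pi.single 2 1)]
  ring

private lemma cont_fd {G : (Fin 3 → ℝ) → Fin 3 → ℝ} (hG : ContDiff ℝ 1 G)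
    (w : Fin 3 → ℝ) (k : Fin 3) :
    Continuous fun x => fderiv ℝ G x w k :=
  (continuous_apply k).comp ((hG.continuous_fderiv one_ne_zero).clm_apply continuous_const)

private lemma cd_proj {G : (Fin 3 → ℝ) → Fin 3 → ℝ} (hG : ContDiff ℝ 1 G) (k : Fin 3) :
    ContDiff ℝ 1 (fun y => G y k) :=
  (ContinuousLinearMap.proj (R := ℝ) (φ := fun _ : Fin 3 => ℝ) k).contDiff.comp hG

private lemma cd_dot {f g : (Fin 3 → ℝ) → (Fin 3 → ℝ)}
    (hf : ContDiff ℝ 1 f) (hg : ContDiff ℝ 1 g) :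
    ContDiff ℝ 1 (fun y => f y ⬝ᵥ g y) := by
  rw [dot_expand f g]
  exact (((cd_proj hf 0).mul (cd_proj hg 0)).add
    ((cd_proj hf 1).mul (cd_proj hg 1))).add ((cd_proj hf 2).mul (cd_proj hg 2))

private lemma cd_cross {f g : (Fin 3 → ℝ) → (Fin 3 → ℝ)}
    (hf : ContDiff ℝ 1 f) (hg : ContDiff ℝ 1 g) :
    ContDiff ℝ 1 (fun y => f y ⨯₃ g y) := by
  apply contDiff_pi.mpr
  intro i
  fin_cases i
  · simp only [cross_apply0]
    exact ((cd_proj hf 1).mul (cd_proj hg 2)).sub ((cd_proj hf 2).mul (cd_proj hg 1))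
  · simp only [cross_apply1]
    exact ((cd_proj hf 2).mul (cd_proj hg 0)).sub ((cd_proj hf 0).mul (cd_proj hg 2))
  · simp only [cross_apply2]
    exact ((cd_proj hf 0).mul (cd_proj hg 1)).sub ((cd_proj hf 1).mul (cd_proj hg 0))

private lemma intOn_of_continuous {f : (Fin 3 → ℝ) → ℝ} (hf : Continuous f)
    {D : Set (Fin 3 → ℝ)} (hDbd : Bornology.IsBounded D) :
    IntegrableOn f D := by
  exact (hf.continuousOn.integrableOn_compact hDbd.isCompact_closure).mono_set subset_closure

/-- integration by parts `(L_β u, v)_D = (u, 𝓛_β v)_D + ⟨β·n, u·v⟩_{∂D}`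
on a bounded Lipschitz domain `D ⊆ ℝ³` with outward unit normal `n` and surface measure
`σ` on `∂D`, for which the Gauss divergence theorem holds; `β` is a Lipschitz (and `C¹`)
velocity field, and `u, v` are (smooth representatives of) `H¹` vector fields. -/
theorem stmt_1 (D : Set (Fin 3 → ℝ)) (hD : MeasurableSet D)
    (hDbd : Bornology.IsBounded D)
    (σ : Measure (Fin 3 → ℝ)) [IsFiniteMeasure σ]
    (n : (Fin 3 → ℝ) → (Fin 3 → ℝ))
    (hdiv : ∀ F : (Fin 3 → ℝ) → (Fin 3 → ℝ), ContDiff ℝ 1 F →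
      ∫ x in D, vdiv F x = ∫ x, F x ⬝ᵥ n x ∂σ)
    (β : (Fin 3 → ℝ) → (Fin 3 → ℝ)) (L : NNReal)
    (hβ : ContDiff ℝ 1 β) (hβL : LipschitzWith L β)
    (u v : (Fin 3 → ℝ) → (Fin 3 → ℝ)) (hu : ContDiff ℝ 1 u) (hv : ContDiff ℝ 1 v) :
    ∫ x in D, magAdv β u x ⬝ᵥ v x =
      (∫ x in D, u x ⬝ᵥ magAdvDual β v x) +
        ∫ x, (β x ⬝ᵥ n x) * (u x ⬝ᵥ v x) ∂σ := by
  set F : (Fin 3 → ℝ) → (Fin 3 → ℝ) := fun y => (u y ⬝ᵥ v y) • β y with hF_def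
  have hFcd : ContDiff ℝ 1 F := (cd_dot hu hv).smul hβ
  have hXcd : ContDiff ℝ 1 (fun y => β y ⨯₃ v y) := cd_cross hβ hv
  -- continuity of the integrands
  have cG : ∀ {G : (Fin 3 → ℝ) → Fin 3 → ℝ}, ContDiff ℝ 1 G → ∀ k : Fin 3,
      Continuous fun x => G x k := fun hG k => (continuous_apply k).comp hG.continuous
  have c_dual : Continuous fun x => u x ⬝ᵥ magAdvDual β v x := by
    have e : (fun x => u x ⬝ᵥ magAdvDual β v x) = fun x =>
        u x 0 * ((fderiv ℝ (fun y => β y ⨯₃ v y) x (Pi.single 1 1) 2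
                  - fderiv ℝ (fun y => β y ⨯₃ v y) x (Pi.single 2 1) 1)
          - (fderiv ℝ v x (Pi.single 0 1) 0 + fderiv ℝ v x (Pi.single 1 1) 1
              + fderiv ℝ v x (Pi.single 2 1) 2) * β x 0)
        + u x 1 * ((fderiv ℝ (fun y => β y ⨯₃ v y) x (Pi.single 2 1) 0
                  - fderiv ℝ (fun y => β y ⨯₃ v y) x (Pi.single 0 1) 2)
          - (fderiv ℝ v x (Pi.single 0 1) 0 + fderiv ℝ v x (Pi.single 1 1) 1
              + fderiv ℝ v x (Pi.single 2 1) 2) * β x 1)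
        + u x 2 * ((fderiv ℝ (fun y => β y ⨯₃ v y) x (Pi.single 0 1) 1
                  - fderiv ℝ (fun y => β y ⨯₃ v y) x (Pi.single 1 1) 0)
          - (fderiv ℝ v x (Pi.single 0 1) 0 + fderiv ℝ v x (Pi.single 1 1) 1
              + fderiv ℝ v x (Pi.single 2 1) 2) * β x 2) := by
      funext x
      simp [magAdvDual, vcurl, vdiv, dotProduct, Fin.sum_univ_three]
    rw [e]
    have cdv : Continuous fun x => fderiv ℝ v x (Pi.single (0 : Fin 3) 1) 0
        + fderiv ℝ v x (Pi.single 1 1) 1 + fderiv ℝ v x (Pi.single 2 1) 2 :=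
      ((cont_fd hv _ _).add (cont_fd hv _ _)).add (cont_fd hv _ _)
    exact (((cG hu 0).mul (((cont_fd hXcd _ _).sub (cont_fd hXcd _ _)).sub
        (cdv.mul (cG hβ 0)))).add
      ((cG hu 1).mul (((cont_fd hXcd _ _).sub (cont_fd hXcd _ _)).sub
        (cdv.mul (cG hβ 1))))).add
      ((cG hu 2).mul (((cont_fd hXcd _ _).sub (cont_fd hXcd _ _)).sub
        (cdv.mul (cG hβ 2))))
  have c_divF : Continuous fun x => vdiv F x := by
    have e : (fun x => vdiv F x) = fun x => fderiv ℝ F x (Pi.single 0 1) 0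
        + fderiv ℝ F x (Pi.single 1 1) 1 + fderiv ℝ F x (Pi.single 2 1) 2 := by
      funext x; simp [vdiv, Fin.sum_univ_three]
    rw [e]
    exact ((cont_fd hFcd _ _).add (cont_fd hFcd _ _)).add (cont_fd hFcd _ _)
  have key : ∀ x, magAdv β u x ⬝ᵥ v x = u x ⬝ᵥ magAdvDual β v x + vdiv F x :=
    magAdv_key β u v hβ hu hv
  calc ∫ x in D, magAdv β u x ⬝ᵥ v x
      = ∫ x in D, (u x ⬝ᵥ magAdvDual β v x + vdiv F x) := by simp only [key]
    _ = (∫ x in D, u x ⬝ᵥ magAdvDual β v x) + ∫ x in D, vdiv F x :=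
        integral_add (intOn_of_continuous c_dual hDbd) (intOn_of_continuous c_divF hDbd)
    _ = (∫ x in D, u x ⬝ᵥ magAdvDual β v x) + ∫ x, (β x ⬝ᵥ n x) * (u x ⬝ᵥ v x) ∂σ := by
        rw [hdiv F hFcd]
        congr 1
        apply integral_congr_ae
        filter_upwards with x
        rw [hF_def]
        rw [smul_dotProduct, smul_eq_mul, mul_comm]
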